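/- For all real numbers 0 ≤ q ≤ p, Λ > 0, M > 0, with η := min(M,q), and every natural number k, there exists C_k > 0 such that ∫_Λ^∞ (log₊(λ/M))^k / ((λ+p)(λ+q)) dλ ≤ C_k (1 + (log₊(p/(Λ+η)))^{k+1} + (log₊(Λ/M))^{k+1}) / (Λ + p + q). -/

import Mathlib

noncomputable def logPlus (x : ℝ) : ℝ := Real.log (max 1 x)

open MeasureTheory Set Real Filter

lemma logPlus_nonneg (x : ℝ) : 0 ≤ logPlus x := Real.log_nonneg (le_max_left _ _)

lemma logPlus_mono {x y : ℝ} (h : x ≤ y) : logPlus x ≤ logPlus y :=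
  Real.log_le_log (lt_of_lt_of_le one_pos (le_max_left 1 x)) (max_le_max le_rfl h)

lemma logPlus_eq_log {x : ℝ} (h : 1 ≤ x) : logPlus x = Real.log x := by
  rw [logPlus, max_eq_right h]

lemma logPlus_eq_zero {x : ℝ} (h : x ≤ 1) : logPlus x = 0 := by
  rw [logPlus, max_eq_left h, Real.log_one]

lemma logPlus_mul_le {x y : ℝ} (hy : 0 ≤ y) :
    logPlus (x * y) ≤ logPlus x + logPlus y := by
  have h1 : (0:ℝ) < max 1 x := lt_of_lt_of_le one_pos (le_max_left _ _)
  have h2 : (0:ℝ) < max 1 y := lt_of_lt_of_le one_pos (le_max_left _ _)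
  unfold logPlus
  rw [← Real.log_mul h1.ne' h2.ne']
  refine Real.log_le_log (lt_of_lt_of_le one_pos (le_max_left _ _)) (max_le ?_ ?_)
  · nlinarith [le_max_left 1 x, le_max_left 1 y]
  · exact mul_le_mul (le_max_right 1 x) (le_max_right 1 y) hy
      (le_trans zero_le_one (le_max_left _ _))

lemma aux_pow_exp (k : ℕ) {u : ℝ} (hu : 0 ≤ u) :
    (1 + u) ^ k ≤ (2 * (k:ℝ) + 2) ^ k * Real.exp (u / 2) := by
  have h1 : 1 + u ≤ (2 * (k:ℝ) + 2) * Real.exp (u / (2 * (k:ℝ) + 2)) := by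
    have hk : (0:ℝ) < 2 * (k:ℝ) + 2 := by positivity
    have := Real.add_one_le_exp (u / (2 * (k:ℝ) + 2))
    have h2 : (2 * (k:ℝ) + 2) * (u / (2 * (k:ℝ) + 2) + 1) ≤
        (2 * (k:ℝ) + 2) * Real.exp (u / (2 * (k:ℝ) + 2)) :=
      mul_le_mul_of_nonneg_left this hk.le
    rw [mul_add, mul_div_cancel₀ _ hk.ne'] at h2
    nlinarith [Nat.cast_nonneg (α := ℝ) k]
  calc (1 + u) ^ k ≤ ((2 * (k:ℝ) + 2) * Real.exp (u / (2 * (k:ℝ) + 2))) ^ k :=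
        pow_le_pow_left₀ (by linarith) h1 k
    _ = (2 * (k:ℝ) + 2) ^ k * Real.exp (u / (2 * (k:ℝ) + 2)) ^ k := mul_pow _ _ _
    _ ≤ (2 * (k:ℝ) + 2) ^ k * Real.exp (u / 2) := by
        gcongr
        rw [← Real.exp_nat_mul]
        apply Real.exp_le_exp.2
        rcases Nat.eq_zero_or_pos k with hk | hk
        · simp [hk]; positivity
        · rw [mul_comm, div_mul_eq_mul_div, div_le_div_iff₀ (by positivity) two_pos]
          nlinarith [Nat.cast_nonneg (α := ℝ) k]

set_option maxHeartbeats 1000000 in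
theorem stmt_4 (k : ℕ) :
    ∃ C : ℝ, 0 < C ∧ ∀ p q Λ M : ℝ, 0 ≤ q → q ≤ p → 0 < Λ → 0 < M →
      (∫ l in Set.Ioi Λ, (logPlus (l / M)) ^ k / ((l + p) * (l + q))) ≤
        C * (1 + (logPlus (p / (Λ + min M q))) ^ (k + 1)
            + (logPlus (Λ / M)) ^ (k + 1)) / (Λ + p + q) := by
  set K : ℝ := (2 * (k:ℝ) + 2) ^ k with hKdef
  have hKpos : 0 < K := by positivity
  refine ⟨(4 + 4 * K) * 9 ^ (k + 1), by positivity, ?_⟩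
  intro p q Λ M hq hqp hΛ hM
  have hp : 0 ≤ p := hq.trans hqp
  set B : ℝ := Λ + min M q with hBdef
  set P : ℝ := Λ + p with hPdef
  have hmin0 : 0 ≤ min M q := le_min hM.le hq
  have hB0 : 0 < B := by rw [hBdef]; linarith
  have hBP : B ≤ P := by
    rw [hBdef, hPdef]
    have := (min_le_right M q).trans hqp
    linarith
  have hP0 : 0 < P := hB0.trans_le hBP
  set b : ℝ := logPlus (Λ / M) with hbdef
  set a : ℝ := logPlus (p / B) with hadef
  have ha0 : 0 ≤ a := logPlus_nonneg _
  have hb0 : 0 ≤ b := logPlus_nonneg _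
  set w : ℝ := Real.log 2 + b with hwdef
  set v : ℝ := Real.log (P / B) with hvdef
  have hw0 : 0 ≤ w := add_nonneg (Real.log_nonneg one_le_two) hb0
  have hv0 : 0 ≤ v := Real.log_nonneg (by rw [le_div_iff₀ hB0]; linarith)
  -- key subadditivity estimate
  have key : ∀ l : ℝ, 0 < l → logPlus (l / M) ≤ logPlus (l / B) + w := by
    intro l hl
    have h1 : l / M = (l / B) * (B / M) := by field_simp
    rw [h1]
    refine (logPlus_mul_le (div_nonneg hB0.le hM.le)).trans ?_
    have hmax1 : (1:ℝ) ≤ max 1 (Λ / M) := le_max_left _ _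
    have hmax2 : Λ / M ≤ max 1 (Λ / M) := le_max_right _ _
    have hΛle : Λ ≤ max 1 (Λ / M) * M := by
      rw [← div_le_iff₀ hM]; exact hmax2
    have h2 : B / M ≤ 2 * max 1 (Λ / M) := by
      rw [div_le_iff₀ hM, hBdef]
      have := min_le_left M q
      nlinarith
    have h3 : logPlus (B / M) ≤ w := by
      calc logPlus (B / M) ≤ logPlus (2 * max 1 (Λ / M)) := logPlus_mono h2
        _ = Real.log (2 * max 1 (Λ / M)) := logPlus_eq_log (by nlinarith)
        _ = Real.log 2 + Real.log (max 1 (Λ / M)) :=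
            Real.log_mul two_ne_zero (by positivity)
        _ = w := by rw [hwdef]; rfl
    linarith [logPlus_nonneg (l / B)]
  -- the dominating function
  set c1 : ℝ := w ^ k / (P * B) with hc1
  set c2 : ℝ := (v + w) ^ k / P with hc2
  set c3 : ℝ := K * (1 + v + w) ^ k * P ^ (-(1:ℝ)/2) with hc3
  have hc1n : 0 ≤ c1 := div_nonneg (pow_nonneg hw0 k) (by positivity)
  have hc2n : 0 ≤ c2 := div_nonneg (pow_nonneg (by linarith) k) hP0.le
  have hc3n : 0 ≤ c3 := by
    apply mul_nonneg (mul_nonneg hKpos.le (pow_nonneg (by linarith) k))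
    exact Real.rpow_nonneg hP0.le _
  set g : ℝ → ℝ := fun l => (Ioc (0:ℝ) B).indicator (fun _ => c1) l
      + (Ioc B P).indicator (fun x => c2 * x⁻¹) l
      + (Ioi P).indicator (fun x => c3 * x ^ (-(3:ℝ)/2)) l with hg
  have i1 : Integrable ((Ioc (0:ℝ) B).indicator (fun _ => c1)) :=
    (integrable_indicator_iff measurableSet_Ioc).2
      (integrableOn_const measure_Ioc_lt_top.ne)
  have i2' : IntegrableOn (fun x : ℝ => c2 * x⁻¹) (Ioc B P) := by
    have hcont : ContinuousOn (fun x : ℝ => c2 * x⁻¹) (Icc B P) :=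
      continuousOn_const.mul (continuousOn_id.inv₀ (fun x hx => (hB0.trans_le hx.1).ne'))
    exact (hcont.integrableOn_Icc).mono_set Ioc_subset_Icc_self
  have i3' : IntegrableOn (fun x : ℝ => c3 * x ^ (-(3:ℝ)/2)) (Ioi P) :=
    (integrableOn_Ioi_rpow_of_lt (by norm_num) hP0).const_mul c3
  have i2 : Integrable ((Ioc B P).indicator (fun x : ℝ => c2 * x⁻¹)) :=
    (integrable_indicator_iff measurableSet_Ioc).2 i2'
  have i3 : Integrable ((Ioi P).indicator (fun x : ℝ => c3 * x ^ (-(3:ℝ)/2))) :=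
    (integrable_indicator_iff measurableSet_Ioi).2 i3'
  have gInt : Integrable g := by rw [hg]; exact (i1.add i2).add i3
  have gnn : ∀ l, 0 ≤ g l := by
    intro l
    rw [hg]
    refine add_nonneg (add_nonneg ?_ ?_) ?_
    · exact indicator_nonneg (fun _ _ => hc1n) l
    · exact indicator_nonneg (fun x hx => mul_nonneg hc2n (inv_nonneg.2 (hB0.trans hx.1).le)) l
    · exact indicator_nonneg (fun x hx => mul_nonneg hc3n (Real.rpow_nonneg (hP0.trans hx).le _)) l
  -- step 1 : comparison
  have step1 : (∫ l in Set.Ioi Λ, (logPlus (l / M)) ^ k / ((l + p) * (l + q)))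
      ≤ ∫ l in Set.Ioi Λ, g l := by
    apply integral_mono_of_nonneg
    · apply ae_restrict_of_forall_mem measurableSet_Ioi
      intro l hl
      have hl0 : 0 < l := hΛ.trans hl
      have hden : 0 < (l + p) * (l + q) := mul_pos (by linarith) (by linarith)
      exact div_nonneg (pow_nonneg (logPlus_nonneg _) k) hden.le
    · exact gInt.restrict
    · apply ae_restrict_of_forall_mem measurableSet_Ioi
      intro l hl
      simp only [mem_Ioi] at hl
      have hl0 : 0 < l := hΛ.trans hl
      have hlp : P ≤ l + p := by rw [hPdef]; linarith
      have hlq : B ≤ l + q := by rw [hBdef]; linarith [min_le_right M q]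
      have hlppos : 0 < l + p := lt_of_lt_of_le hP0 hlp
      have hlqpos : 0 < l + q := lt_of_lt_of_le hB0 hlq
      have hnum0 : 0 ≤ logPlus (l / M) := logPlus_nonneg _
      have hkey := key l hl0
      rcases le_or_gt l B with h1 | h1
      · have e1 : (Ioc (0:ℝ) B).indicator (fun _ => c1) l = c1 :=
          Set.indicator_of_mem (show l ∈ Ioc (0:ℝ) B from ⟨hl0, h1⟩) _
        have e2 : (Ioc B P).indicator (fun x => c2 * x⁻¹) l = 0 :=
          indicator_of_notMem (fun hx => absurd hx.1 (not_lt.2 h1)) _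
        have e3 : (Ioi P).indicator (fun x => c3 * x ^ (-(3:ℝ)/2)) l = 0 :=
          indicator_of_notMem (fun hx => absurd (h1.trans hBP) (not_le.2 hx)) _
        rw [hg]
        simp only [e1, e2, e3, add_zero]
        have hnum : logPlus (l / M) ≤ w := by
          have hz : logPlus (l / B) = 0 := logPlus_eq_zero (by rw [div_le_one hB0]; exact h1)
          linarith
        rw [hc1]
        exact div_le_div₀ (pow_nonneg hw0 k) (pow_le_pow_left₀ hnum0 hnum k)
          (mul_pos hP0 hB0) (mul_le_mul hlp hlq hB0.le hlppos.le)
      · rcases le_or_gt l P with h2 | h2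
        · have e1 : (Ioc (0:ℝ) B).indicator (fun _ => c1) l = 0 :=
            indicator_of_notMem (fun hx => absurd hx.2 (not_le.2 h1)) _
          have e2 : (Ioc B P).indicator (fun x => c2 * x⁻¹) l = c2 * l⁻¹ :=
            Set.indicator_of_mem (show l ∈ Ioc B P from ⟨h1, h2⟩) _
          have e3 : (Ioi P).indicator (fun x => c3 * x ^ (-(3:ℝ)/2)) l = 0 :=
            indicator_of_notMem (fun hx => absurd h2 (not_le.2 hx)) _
          rw [hg]
          simp only [e1, e2, e3, add_zero, zero_add]
          have hnum : logPlus (l / M) ≤ v + w := by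
            have hz : logPlus (l / B) = Real.log (l / B) :=
              logPlus_eq_log ((one_le_div hB0).2 h1.le)
            have hz2 : Real.log (l / B) ≤ v := by
              rw [hvdef]
              exact Real.log_le_log (div_pos hl0 hB0) ((div_le_div_iff_of_pos_right hB0).2 h2)
            linarith
          have hcalc : logPlus (l / M) ^ k / ((l + p) * (l + q)) ≤ (v + w) ^ k / (P * l) :=
            div_le_div₀ (pow_nonneg (by linarith) k) (pow_le_pow_left₀ hnum0 hnum k)
              (mul_pos hP0 hl0) (mul_le_mul hlp (by linarith) hl0.le hlppos.le)
          refine hcalc.trans_eq ?_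
          rw [hc2]
          field_simp
        · have e1 : (Ioc (0:ℝ) B).indicator (fun _ => c1) l = 0 :=
            indicator_of_notMem (fun hx => absurd hx.2 (not_le.2 h1)) _
          have e2 : (Ioc B P).indicator (fun x => c2 * x⁻¹) l = 0 :=
            indicator_of_notMem (fun hx => absurd hx.2 (not_le.2 h2)) _
          have e3 : (Ioi P).indicator (fun x => c3 * x ^ (-(3:ℝ)/2)) l = c3 * l ^ (-(3:ℝ)/2) :=
            indicator_of_mem h2 _
          rw [hg]
          simp only [e1, e2, e3, zero_add]
          have hu0 : 0 ≤ Real.log (l / P) := Real.log_nonneg ((one_le_div hP0).2 h2.le)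
          set u : ℝ := Real.log (l / P) with hudef
          have hsplit : logPlus (l / B) = u + v := by
            rw [logPlus_eq_log ((one_le_div hB0).2 (hBP.trans h2.le)), hudef, hvdef,
              Real.log_div hl0.ne' hB0.ne', Real.log_div hl0.ne' hP0.ne',
              Real.log_div hP0.ne' hB0.ne']
            ring
          have hnum : logPlus (l / M) ≤ u + v + w := by
            rw [hsplit] at hkey; linarith
          have hpow : (u + v + w) ^ k ≤ (1 + u) ^ k * (1 + v + w) ^ k := by
            rw [← mul_pow]
            refine pow_le_pow_left₀ (by linarith) ?_ k
            nlinarith [mul_nonneg hu0 (show (0:ℝ) ≤ v + w by linarith)]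
          have hexp : Real.exp (u / 2) = (l / P) ^ ((1:ℝ)/2) := by
            rw [Real.rpow_def_of_pos (div_pos hl0 hP0), hudef]
            ring_nf
          have hnumk : logPlus (l / M) ^ k ≤ K * (1 + v + w) ^ k * (l / P) ^ ((1:ℝ)/2) := by
            calc logPlus (l / M) ^ k ≤ (u + v + w) ^ k := pow_le_pow_left₀ hnum0 hnum k
              _ ≤ (1 + u) ^ k * (1 + v + w) ^ k := hpow
              _ ≤ ((2 * (k:ℝ) + 2) ^ k * Real.exp (u / 2)) * (1 + v + w) ^ k :=
                  mul_le_mul_of_nonneg_right (aux_pow_exp k hu0) (pow_nonneg (by linarith) k)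
              _ = K * (1 + v + w) ^ k * (l / P) ^ ((1:ℝ)/2) := by rw [hexp, hKdef]; ring
          have hmain : logPlus (l / M) ^ k / ((l + p) * (l + q))
              ≤ K * (1 + v + w) ^ k * (l / P) ^ ((1:ℝ)/2) / (l * l) := by
            apply div_le_div₀ ?_ hnumk (mul_pos hl0 hl0)
              (mul_le_mul (by linarith) (by linarith) hl0.le hlppos.le)
            have : (0:ℝ) ≤ (l / P) ^ ((1:ℝ)/2) := Real.rpow_nonneg (div_pos hl0 hP0).le _
            positivity
          refine hmain.trans_eq ?_
          have eA : (l / P) ^ ((1:ℝ)/2) = l ^ ((1:ℝ)/2) * P ^ (-(1:ℝ)/2) := by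
            rw [Real.div_rpow hl0.le hP0.le, div_eq_mul_inv, ← Real.rpow_neg hP0.le]
            norm_num
          have eB : l ^ ((1:ℝ)/2) / (l * l) = l ^ (-(3:ℝ)/2) := by
            have h2' : l * l = l ^ (2:ℝ) := by rw [Real.rpow_two]; ring
            rw [h2', ← Real.rpow_sub hl0]
            norm_num
          rw [hc3, eA, ← eB]
          ring
  -- step 2 : extend to the whole line
  have step2 : (∫ l in Set.Ioi Λ, g l) ≤ ∫ l, g l :=
    setIntegral_le_integral gInt (Eventually.of_forall gnn)
  -- compute the integral of g
  have hIg : (∫ l, g l) = c1 * B + c2 * v + c3 * (2 * P ^ (-(1:ℝ)/2)) := by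
    have iA : Integrable (fun l : ℝ => (Ioc (0:ℝ) B).indicator (fun _ => c1) l
        + (Ioc B P).indicator (fun x => c2 * x⁻¹) l) := i1.add i2
    rw [hg]
    rw [integral_add iA i3, integral_add i1 i2,
      integral_indicator measurableSet_Ioc, integral_indicator measurableSet_Ioc,
      integral_indicator measurableSet_Ioi]
    congr 1
    · congr 1
      · rw [setIntegral_const, measureReal_def, Real.volume_Ioc, ENNReal.toReal_ofReal (by linarith),
          smul_eq_mul]
        ring
      · rw [integral_const_mul, ← _root_.intervalIntegral.integral_of_le hBP,
          _root_.integral_inv]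
        rw [uIcc_of_le hBP]
        intro hmem
        exact absurd hmem.1 (not_le.2 hB0)
    · rw [integral_const_mul, integral_Ioi_rpow_of_lt (by norm_num) hP0]
      have he : (-(3:ℝ)/2 + 1) = -(1:ℝ)/2 := by norm_num
      rw [he]
      ring
  -- arithmetic on the bound
  have hm1 : (1:ℝ) ≤ 1 + v + w := by linarith
  have hm0 : (0:ℝ) ≤ 1 + v + w := by linarith
  have hsum : c1 * B + c2 * v + c3 * (2 * P ^ (-(1:ℝ)/2))
      ≤ (2 + 2 * K) * (1 + v + w) ^ (k + 1) / P := by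
    have t1 : c1 * B = w ^ k / P := by rw [hc1]; field_simp
    have t2 : c2 * v = (v + w) ^ k * v / P := by rw [hc2]; ring
    have t3 : c3 * (2 * P ^ (-(1:ℝ)/2)) = 2 * K * (1 + v + w) ^ k / P := by
      have hPP : P ^ (-(1:ℝ)/2) * P ^ (-(1:ℝ)/2) = P⁻¹ := by
        rw [← Real.rpow_add hP0]
        norm_num [Real.rpow_neg_one]
      calc c3 * (2 * P ^ (-(1:ℝ)/2))
          = 2 * K * (1 + v + w) ^ k * (P ^ (-(1:ℝ)/2) * P ^ (-(1:ℝ)/2)) := by rw [hc3]; ring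
        _ = 2 * K * (1 + v + w) ^ k / P := by rw [hPP]; ring
    rw [t1, t2, t3, ← add_div, ← add_div]
    apply (div_le_div_iff_of_pos_right hP0).2
    have e1 : w ^ k ≤ (1 + v + w) ^ (k + 1) :=
      le_trans (pow_le_pow_left₀ hw0 (by linarith) k) (pow_le_pow_right₀ hm1 (Nat.le_succ k))
    have e2 : (v + w) ^ k * v ≤ (1 + v + w) ^ (k + 1) := by
      have h1 : (v + w) ^ k ≤ (1 + v + w) ^ k := pow_le_pow_left₀ (by linarith) (by linarith) k
      calc (v + w) ^ k * v ≤ (1 + v + w) ^ k * (1 + v + w) :=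
            mul_le_mul h1 (by linarith) hv0 (pow_nonneg hm0 k)
        _ = (1 + v + w) ^ (k + 1) := (pow_succ _ _).symm
    have e3 : (1 + v + w) ^ k ≤ (1 + v + w) ^ (k + 1) := pow_le_pow_right₀ hm1 (Nat.le_succ k)
    have e4 := mul_le_mul_of_nonneg_left e3 (by linarith [hKpos] : (0:ℝ) ≤ 2 * K)
    linarith
  -- comparing logs
  have hva : v ≤ Real.log 2 + a := by
    have hmax1 : (1:ℝ) ≤ max 1 (p / B) := le_max_left _ _
    have hmax2 : p / B ≤ max 1 (p / B) := le_max_right _ _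
    have h2 : P / B ≤ 2 * max 1 (p / B) := by
      rw [div_le_iff₀ hB0, hPdef]
      have hpB : p ≤ max 1 (p / B) * B := by rw [← div_le_iff₀ hB0]; exact hmax2
      nlinarith
    calc v = Real.log (P / B) := hvdef
      _ ≤ Real.log (2 * max 1 (p / B)) := Real.log_le_log (div_pos hP0 hB0) h2
      _ = Real.log 2 + Real.log (max 1 (p / B)) := Real.log_mul two_ne_zero (by positivity)
      _ = Real.log 2 + a := by rw [hadef]; rfl
  have hlog2 : Real.log 2 ≤ 1 := le_trans Real.log_two_lt_d9.le (by norm_num)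
  have hm9 : 1 + v + w ≤ 9 * max 1 (max a b) := by
    have h1 : (1:ℝ) ≤ max 1 (max a b) := le_max_left _ _
    have h2 : a ≤ max 1 (max a b) := le_trans (le_max_left a b) (le_max_right _ _)
    have h3 : b ≤ max 1 (max a b) := le_trans (le_max_right a b) (le_max_right _ _)
    have hww : w = Real.log 2 + b := hwdef
    linarith
  have hmupow : (max 1 (max a b)) ^ (k+1) ≤ 1 + a^(k+1) + b^(k+1) := by
    have hpa : (0:ℝ) ≤ a ^ (k+1) := pow_nonneg ha0 _
    have hpb : (0:ℝ) ≤ b ^ (k+1) := pow_nonneg hb0 _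
    rcases max_choice 1 (max a b) with h | h
    · rw [h, one_pow]; linarith
    · rw [h]
      rcases max_choice a b with h' | h' <;> rw [h'] <;> linarith
  have hS1 : (0:ℝ) ≤ 1 + a^(k+1) + b^(k+1) :=
    by linarith [pow_nonneg ha0 (k+1), pow_nonneg hb0 (k+1)]
  have hmax9 : (1 + v + w) ^ (k+1) ≤ 9 ^ (k+1) * (1 + a^(k+1) + b^(k+1)) := by
    calc (1 + v + w) ^ (k+1) ≤ (9 * max 1 (max a b)) ^ (k+1) := pow_le_pow_left₀ hm0 hm9 _
      _ = 9 ^ (k+1) * (max 1 (max a b)) ^ (k+1) := mul_pow _ _ _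
      _ ≤ 9 ^ (k+1) * (1 + a^(k+1) + b^(k+1)) :=
          mul_le_mul_of_nonneg_left hmupow (by positivity)
  have hA : 0 < Λ + p + q := by linarith
  have hAP : Λ + p + q ≤ 2 * P := by rw [hPdef]; linarith
  calc (∫ l in Set.Ioi Λ, (logPlus (l / M)) ^ k / ((l + p) * (l + q)))
      ≤ ∫ l in Set.Ioi Λ, g l := step1
    _ ≤ ∫ l, g l := step2
    _ = c1 * B + c2 * v + c3 * (2 * P ^ (-(1:ℝ)/2)) := hIg
    _ ≤ (2 + 2*K) * (1 + v + w)^(k+1) / P := hsum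
    _ ≤ (2 + 2*K) * (9^(k+1) * (1 + a^(k+1) + b^(k+1))) / P := by
        apply (div_le_div_iff_of_pos_right hP0).2
        exact mul_le_mul_of_nonneg_left hmax9 (by linarith [hKpos])
    _ ≤ (4 + 4*K) * 9^(k+1) * (1 + a^(k+1) + b^(k+1)) / (Λ + p + q) := by
        rw [div_le_div_iff₀ hP0 hA]
        have hS : (0:ℝ) ≤ (2 + 2*K) * (9^(k+1) * (1 + a^(k+1) + b^(k+1))) := by
          apply mul_nonneg (by linarith [hKpos])
          exact mul_nonneg (pow_nonneg (by norm_num) _) hS1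
        have hfin := mul_le_mul_of_nonneg_left hAP hS
        nlinarith [hfin]
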